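/- Quasiconvexity of subgraph regions: if f : [a,b] → ℝ is L-Lipschitz and positive, then the region Ω = {(x,y) : a ≤ x ≤ b, 0 ≤ y ≤ f(x)} bounded by the graph of f and the x-axis is (L+1)-quasiconvex: any two points of Ω are joined by a path in Ω of length at most (L+1) times their Euclidean distance. -/

import Mathlib

open Set

/-- The closed region under the graph of `f` over `[a,b]`. -/
def subgraph (a b : ℝ) (f : ℝ → ℝ) : Set (EuclideanSpace ℝ (Fin 2)) :=
  {p | p 0 ∈ Set.Icc a b ∧ p 1 ∈ Set.Icc 0 (f (p 0))}

lemma stmt12_aux (L A D : ℝ) (hL : 0 ≤ L) :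
    A ^ 2 + (D + L * A) ^ 2 ≤ (L + 1) ^ 2 * (A ^ 2 + D ^ 2) := by
  have h1 : 0 ≤ A ^ 2 + D ^ 2 - A * D := by nlinarith [sq_nonneg (A - D), sq_nonneg (A + D)]
  nlinarith [mul_nonneg hL h1, mul_nonneg (mul_nonneg hL hL) (sq_nonneg D)]

/-- If `f : [a,b] → ℝ` is positive and `L`-Lipschitz, the region between its graph and the
`x`-axis is `(L+1)`-quasiconvex: any two of its points are joined by a path inside it of
length at most `(L+1)` times their distance. -/
theorem stmt12 (L a b : ℝ) (hL : 0 ≤ L) (hab : a ≤ b) (f : ℝ → ℝ)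
    (hfpos : ∀ x ∈ Set.Icc a b, 0 < f x)
    (hflip : ∀ x ∈ Set.Icc a b, ∀ y ∈ Set.Icc a b, |f x - f y| ≤ L * |x - y|) :
    ∀ p ∈ subgraph a b f, ∀ q ∈ subgraph a b f,
      ∃ γ : ℝ → EuclideanSpace ℝ (Fin 2), γ 0 = p ∧ γ 1 = q ∧
        ContinuousOn γ (Set.Icc 0 1) ∧ Set.MapsTo γ (Set.Icc 0 1) (subgraph a b f) ∧
        eVariationOn γ (Set.Icc 0 1) ≤ ENNReal.ofReal ((L + 1) * dist p q) := by
  intro p hp q hq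
  obtain ⟨⟨hpa, hpb⟩, hp0, hpf⟩ := hp
  obtain ⟨⟨hqa, hqb⟩, hq0, hqf⟩ := hq
  set x₀ := p 0 with hx₀
  set y₀ := p 1 with hy₀
  set x₁ := q 0 with hx₁
  set y₁ := q 1 with hy₁
  set A : ℝ := |x₁ - x₀| with hA
  set D : ℝ := |y₁ - y₀| with hD
  set B : ℝ := D + L * A with hB
  have hA0 : 0 ≤ A := abs_nonneg _
  have hD0 : 0 ≤ D := abs_nonneg _
  have hB0 : 0 ≤ B := by positivity
  set X : ℝ → ℝ := fun t => x₀ + t * (x₁ - x₀) with hX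
  set Y : ℝ → ℝ := fun t => min (y₀ + t * (y₁ - y₀)) (f (X t)) with hY
  set γ : ℝ → EuclideanSpace ℝ (Fin 2) :=
    fun t => (WithLp.equiv 2 (Fin 2 → ℝ)).symm ![X t, Y t] with hγ
  have hγ0 : ∀ t, γ t 0 = X t := fun t => rfl
  have hγ1 : ∀ t, γ t 1 = Y t := fun t => rfl
  -- X maps [0,1] into [a,b]
  have hXmem : ∀ t ∈ Icc (0:ℝ) 1, X t ∈ Icc a b := by
    intro t ht
    obtain ⟨ht0, ht1⟩ := ht
    constructor
    · simp only [hX]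
      nlinarith [mul_nonneg ht0 (sub_nonneg.2 hqa), mul_nonneg (sub_nonneg.2 ht1) (sub_nonneg.2 hpa)]
    · simp only [hX]
      nlinarith [mul_nonneg ht0 (sub_nonneg.2 hqb), mul_nonneg (sub_nonneg.2 ht1) (sub_nonneg.2 hpb)]
  have hmaps : Set.MapsTo γ (Set.Icc 0 1) (subgraph a b f) := by
    intro t ht
    refine ⟨?_, ?_, ?_⟩
    · rw [hγ0]; exact hXmem t ht
    · rw [hγ1]
      refine le_min ?_ (le_of_lt (hfpos _ (hXmem t ht)))
      obtain ⟨ht0, ht1⟩ := ht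
      nlinarith [mul_nonneg ht0 hq0, mul_nonneg (sub_nonneg.2 ht1) hp0]
    · rw [hγ1, hγ0]; exact min_le_right _ _
  -- Lipschitz estimate
  have hK : ∀ s ∈ Icc (0:ℝ) 1, ∀ t ∈ Icc (0:ℝ) 1,
      dist (γ s) (γ t) ≤ Real.sqrt (A ^ 2 + B ^ 2) * dist s t := by
    intro s hs t ht
    have hdX : |X s - X t| = A * |s - t| := by
      have : X s - X t = (s - t) * (x₁ - x₀) := by simp only [hX]; ring
      rw [this, abs_mul, mul_comm]
    have hdY : |Y s - Y t| ≤ B * |s - t| := by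
      refine (abs_min_sub_min_le_max _ _ _ _).trans (max_le ?_ ?_)
      · have : y₀ + s * (y₁ - y₀) - (y₀ + t * (y₁ - y₀)) = (s - t) * (y₁ - y₀) := by ring
        rw [this, abs_mul]
        have : |s - t| * |y₁ - y₀| = D * |s - t| := by rw [mul_comm]
        rw [this]
        nlinarith [abs_nonneg (s - t), mul_nonneg hL hA0]
      · have h1 : |f (X s) - f (X t)| ≤ L * |X s - X t| :=
          hflip _ (hXmem s hs) _ (hXmem t ht)
        rw [hdX] at h1
        refine h1.trans ?_
        nlinarith [abs_nonneg (s - t)]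
    have hed : dist (γ s) (γ t) = Real.sqrt (dist (X s) (X t) ^ 2 + dist (Y s) (Y t) ^ 2) := by
      rw [EuclideanSpace.dist_eq, Fin.sum_univ_two, hγ0, hγ0, hγ1, hγ1]
    rw [hed, Real.dist_eq, Real.dist_eq, Real.dist_eq]
    have : Real.sqrt (A ^ 2 + B ^ 2) * |s - t|
        = Real.sqrt ((A ^ 2 + B ^ 2) * |s - t| ^ 2) := by
      rw [Real.sqrt_mul (by positivity), Real.sqrt_sq_eq_abs, abs_abs]
    rw [this]
    apply Real.sqrt_le_sqrt
    calc |X s - X t| ^ 2 + |Y s - Y t| ^ 2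
        ≤ (A * |s - t|) ^ 2 + (B * |s - t|) ^ 2 := by
          have h2 : |Y s - Y t| ^ 2 ≤ (B * |s - t|) ^ 2 :=
            pow_le_pow_left₀ (abs_nonneg _) hdY 2
          rw [hdX]; linarith
      _ = (A ^ 2 + B ^ 2) * |s - t| ^ 2 := by ring
  have hlip : LipschitzOnWith (Real.toNNReal (Real.sqrt (A ^ 2 + B ^ 2))) γ (Icc 0 1) := by
    apply LipschitzOnWith.of_dist_le_mul
    intro s hs t ht
    have := hK s hs t ht
    rwa [Real.coe_toNNReal _ (Real.sqrt_nonneg _)]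
  -- endpoints
  have hstart : γ 0 = p := by
    ext i
    fin_cases i
    · show X 0 = x₀; simp [hX]
    · show Y 0 = y₀
      simp only [hY, hX, zero_mul, add_zero]
      exact min_eq_left hpf
  have hend : γ 1 = q := by
    ext i
    fin_cases i
    · show X 1 = x₁; simp [hX]
    · show Y 1 = y₁
      have h1 : X 1 = x₁ := by simp [hX]
      simp only [hY, h1, one_mul]
      have : y₀ + (y₁ - y₀) = y₁ := by ring
      rw [this]
      exact min_eq_left hqf
  refine ⟨γ, hstart, hend, hlip.continuousOn, hmaps, ?_⟩
  -- variation bound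
  have hvar : eVariationOn γ (Icc 0 1)
      ≤ (Real.toNNReal (Real.sqrt (A ^ 2 + B ^ 2)) : ENNReal)
        * eVariationOn (id : ℝ → ℝ) (Icc 0 1) :=
    hlip.comp_eVariationOn_le (mapsTo_id (Icc (0:ℝ) 1))
  have hid : eVariationOn (id : ℝ → ℝ) (Icc 0 1) ≤ ENNReal.ofReal 1 := by
    have := (monotoneOn_id (s := Icc (0:ℝ) 1)).eVariationOn_le
      (a := 0) (b := 1) (by simp) (by simp)
    simpa [inter_self] using this
  have hdist : dist p q = Real.sqrt (A ^ 2 + D ^ 2) := by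
    rw [EuclideanSpace.dist_eq, Fin.sum_univ_two, Real.dist_eq, Real.dist_eq,
      ← hx₀, ← hy₀, ← hx₁, ← hy₁, hA, hD, abs_sub_comm x₀ x₁, abs_sub_comm y₀ y₁]
  have hreal : Real.sqrt (A ^ 2 + B ^ 2) ≤ (L + 1) * dist p q := by
    rw [hdist]
    have h2 : (L + 1) * Real.sqrt (A ^ 2 + D ^ 2)
        = Real.sqrt ((L + 1) ^ 2 * (A ^ 2 + D ^ 2)) := by
      rw [Real.sqrt_mul (sq_nonneg _), Real.sqrt_sq (by linarith)]
    rw [h2]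
    apply Real.sqrt_le_sqrt
    rw [hB]
    exact stmt12_aux L A D hL
  calc eVariationOn γ (Icc 0 1)
      ≤ (Real.toNNReal (Real.sqrt (A ^ 2 + B ^ 2)) : ENNReal)
        * eVariationOn (id : ℝ → ℝ) (Icc 0 1) := hvar
    _ ≤ (Real.toNNReal (Real.sqrt (A ^ 2 + B ^ 2)) : ENNReal) * ENNReal.ofReal 1 :=
        mul_le_mul_right hid _
    _ = ENNReal.ofReal (Real.sqrt (A ^ 2 + B ^ 2)) := by
        rw [ENNReal.ofReal_one, mul_one, ENNReal.ofReal]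
    _ ≤ ENNReal.ofReal ((L + 1) * dist p q) := ENNReal.ofReal_le_ofReal hreal
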